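/- arXiv:2007.09661 — 3 statements merged into one kernel-verified Lean document; each statement's English description precedes it below -/
import Mathlib

section
/- For nonnegative integer n and real numbers p, q with 0 < p < 1 and q = 1 - p, the sum ∑_{r=0}^{n} C(2n−r, n) (p^{n+1} q^{n−r} + q^{n+1} p^{n−r}) equals 1. -/
open Finset

lemma matchbox_tail (p q : ℝ) (h : p + q = 1) (n m : ℕ) :
    ∑ k ∈ Finset.range (m + 1), (Nat.choose (n + k) k : ℝ) * p ^ (n + 1) * q ^ k
      = ∑ j ∈ Finset.range (m + 1),
          (Nat.choose (n + m + 1) (n + 1 + j) : ℝ) * p ^ (n + 1 + j) * q ^ (m - j) := by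
  induction m with
  | zero => simp
  | succ m ih =>
    rw [Finset.sum_range_succ, ih]
    have split : ∀ j ∈ Finset.range (m + 2),
        (Nat.choose (n + (m + 1) + 1) (n + 1 + j) : ℝ) * p ^ (n + 1 + j) * q ^ (m + 1 - j)
          = (Nat.choose (n + m + 1) (n + j) : ℝ) * p ^ (n + 1 + j) * q ^ (m + 1 - j)
            + (Nat.choose (n + m + 1) (n + 1 + j) : ℝ) * p ^ (n + 1 + j) * q ^ (m + 1 - j) := by
      intro j _
      have : Nat.choose (n + (m + 1) + 1) (n + 1 + j)
          = Nat.choose (n + m + 1) (n + j) + Nat.choose (n + m + 1) (n + 1 + j) := by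
        have e1 : n + (m + 1) + 1 = (n + m + 1) + 1 := by ring
        have e2 : n + 1 + j = (n + j) + 1 := by ring
        rw [e1, e2, Nat.choose_succ_succ']
      rw [this]
      push_cast
      ring
    rw [Finset.sum_congr rfl split, Finset.sum_add_distrib]
    -- first sum: shift index
    have hA : ∑ j ∈ Finset.range (m + 2),
        (Nat.choose (n + m + 1) (n + j) : ℝ) * p ^ (n + 1 + j) * q ^ (m + 1 - j)
        = p * (∑ j ∈ Finset.range (m + 1),
            (Nat.choose (n + m + 1) (n + 1 + j) : ℝ) * p ^ (n + 1 + j) * q ^ (m - j))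
          + (Nat.choose (n + m + 1) n : ℝ) * p ^ (n + 1) * q ^ (m + 1) := by
      rw [Finset.sum_range_succ' _ (m + 1)]
      simp only [Nat.add_sub_cancel, Nat.succ_sub_succ]
      rw [Finset.mul_sum]
      congr 1
      refine Finset.sum_congr rfl fun j hj => ?_
      have e : n + 1 + (j + 1) = (n + 1 + j) + 1 := by ring
      have e2 : n + (j + 1) = n + 1 + j := by ring
      rw [e, e2, pow_succ]
      ring
    have hB : ∑ j ∈ Finset.range (m + 2),
        (Nat.choose (n + m + 1) (n + 1 + j) : ℝ) * p ^ (n + 1 + j) * q ^ (m + 1 - j)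
        = q * (∑ j ∈ Finset.range (m + 1),
            (Nat.choose (n + m + 1) (n + 1 + j) : ℝ) * p ^ (n + 1 + j) * q ^ (m - j)) := by
      rw [Finset.sum_range_succ]
      have hz : Nat.choose (n + m + 1) (n + 1 + (m + 1)) = 0 := by
        apply Nat.choose_eq_zero_of_lt
        omega
      rw [hz]
      push_cast
      rw [Finset.mul_sum]
      simp only [zero_mul, add_zero]
      refine Finset.sum_congr rfl fun j hj => ?_
      have hjm : j ≤ m := by
        simp only [Finset.mem_range] at hj; omega
      have e : m + 1 - j = (m - j) + 1 := by omega
      rw [e, pow_succ]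
      ring
    rw [hA, hB]
    have hs : Nat.choose (n + (m + 1)) (m + 1) = Nat.choose (n + m + 1) n := by
      have e : n + (m + 1) = n + m + 1 := by ring
      rw [e]
      exact Nat.choose_symm_of_eq_add (by omega)
    rw [hs]
    set S := ∑ j ∈ Finset.range (m + 1),
        (Nat.choose (n + m + 1) (n + 1 + j) : ℝ) * p ^ (n + 1 + j) * q ^ (m - j) with hS
    linear_combination (-S) * h

theorem matchbox_normalization (n : ℕ) (p q : ℝ) (hp0 : 0 < p) (hp1 : p < 1)
    (hq : q = 1 - p) :
    ∑ r ∈ Finset.range (n + 1),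
      (Nat.choose (2 * n - r) n : ℝ) * (p ^ (n + 1) * q ^ (n - r) + q ^ (n + 1) * p ^ (n - r))
      = 1 := by
  have hpq : p + q = 1 := by rw [hq]; ring
  have hqp : q + p = 1 := by rw [hq]; ring
  -- reindex r ↦ n - r
  have hrefl : ∑ r ∈ Finset.range (n + 1),
      (Nat.choose (2 * n - r) n : ℝ) * (p ^ (n + 1) * q ^ (n - r) + q ^ (n + 1) * p ^ (n - r))
      = ∑ k ∈ Finset.range (n + 1),
        (Nat.choose (n + k) k : ℝ) * (p ^ (n + 1) * q ^ k + q ^ (n + 1) * p ^ k) := by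
    rw [← Finset.sum_range_reflect]
    refine Finset.sum_congr rfl fun k hk => ?_
    have hkn : k ≤ n := by simp only [Finset.mem_range] at hk; omega
    simp only [Nat.add_sub_cancel]
    have e1 : 2 * n - (n - k) = n + k := by omega
    have e2 : n - (n - k) = k := by omega
    have e3 : Nat.choose (n + k) n = Nat.choose (n + k) k :=
      Nat.choose_symm_of_eq_add (by omega)
    rw [e1, e2, e3]
  rw [hrefl]
  have expand : ∑ k ∈ Finset.range (n + 1),
      (Nat.choose (n + k) k : ℝ) * (p ^ (n + 1) * q ^ k + q ^ (n + 1) * p ^ k)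
      = (∑ k ∈ Finset.range (n + 1), (Nat.choose (n + k) k : ℝ) * p ^ (n + 1) * q ^ k)
        + (∑ k ∈ Finset.range (n + 1), (Nat.choose (n + k) k : ℝ) * q ^ (n + 1) * p ^ k) := by
    rw [← Finset.sum_add_distrib]
    refine Finset.sum_congr rfl fun k _ => ?_
    ring
  rw [expand, matchbox_tail p q hpq n n, matchbox_tail q p hqp n n]
  -- second sum: reflect j ↦ n - j to get low binomial tail
  have hsecond : ∑ j ∈ Finset.range (n + 1),
      (Nat.choose (n + n + 1) (n + 1 + j) : ℝ) * q ^ (n + 1 + j) * p ^ (n - j)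
      = ∑ i ∈ Finset.range (n + 1),
        (Nat.choose (n + n + 1) i : ℝ) * p ^ i * q ^ (n + n + 1 - i) := by
    rw [← Finset.sum_range_reflect]
    refine Finset.sum_congr rfl fun j hj => ?_
    have hjn : j ≤ n := by simp only [Finset.mem_range] at hj; omega
    simp only [Nat.add_sub_cancel]
    have e1 : Nat.choose (n + n + 1) (n + 1 + (n - j)) = Nat.choose (n + n + 1) j :=
      Nat.choose_symm_of_eq_add (by omega)
    have e2 : n - (n - j) = j := by omega
    have e3 : n + 1 + (n - j) = n + n + 1 - j := by omega
    rw [e1, e2, e3]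
    ring
  rw [hsecond]
  -- combine into full binomial expansion of (p+q)^(2n+1)
  have hfull : (∑ i ∈ Finset.range (n + 1),
        (Nat.choose (n + n + 1) i : ℝ) * p ^ i * q ^ (n + n + 1 - i))
      + (∑ j ∈ Finset.range (n + 1),
        (Nat.choose (n + n + 1) (n + 1 + j) : ℝ) * p ^ (n + 1 + j) * q ^ (n - j))
      = ∑ i ∈ Finset.range (2 * n + 2),
        (Nat.choose (n + n + 1) i : ℝ) * p ^ i * q ^ (n + n + 1 - i) := by
    have e : 2 * n + 2 = (n + 1) + (n + 1) := by ring
    have hadd := Finset.sum_range_add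
      (fun i => (Nat.choose (n + n + 1) i : ℝ) * p ^ i * q ^ (n + n + 1 - i)) (n + 1) (n + 1)
    rw [e, hadd]
    congr 1
    refine Finset.sum_congr rfl fun j hj => ?_
    have hjn : j ≤ n := by simp only [Finset.mem_range] at hj; omega
    have e2 : n + n + 1 - (n + 1 + j) = n - j := by omega
    simp only [e2]
  rw [add_comm, hfull]
  have := add_pow p q (2 * n + 1)
  rw [hpq, one_pow] at this
  rw [this]
  refine Finset.sum_congr rfl fun i hi => ?_
  have e : 2 * n + 1 = n + n + 1 := by ring
  rw [e]
  ring
end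

section
/- For positive integer n and real numbers p, q with 0 < p < 1 and q = 1 - p, if S_n^{(1)} = ∑_{r=0}^{n} C(2n−r, n) p^{n+1} q^{n−r}, then S_n^{(1)} = S_{n−1}^{(1)} + p^n q^n C(2n, n) (1/2 − q). -/
theorem matchbox_recurrence (n : ℕ) (hn : 1 ≤ n) (p q : ℝ) (hp0 : 0 < p) (hp1 : p < 1)
    (hq : q = 1 - p) :
    ∑ r ∈ Finset.range (n + 1), (Nat.choose (2 * n - r) n : ℝ) * p ^ (n + 1) * q ^ (n - r)
      = (∑ r ∈ Finset.range n,
          (Nat.choose (2 * (n - 1) - r) (n - 1) : ℝ) * p ^ n * q ^ (n - 1 - r))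
        + p ^ n * q ^ n * (Nat.choose (2 * n) n : ℝ) * (1 / 2 - q) := by
  obtain ⟨m, rfl⟩ := Nat.exists_eq_add_of_le' hn
  simp only [Nat.add_sub_cancel]
  have hp : p ≠ 0 := ne_of_gt hp0
  set T : ℝ := ∑ r ∈ Finset.range (m + 1 + 1),
      (Nat.choose (2 * (m + 1) - r) (m + 1) : ℝ) * p ^ (m + 1 + 1) * q ^ (m + 1 - r) with hT
  set U : ℝ := ∑ r ∈ Finset.range (m + 1),
      (Nat.choose (2 * m - r) m : ℝ) * p ^ (m + 1) * q ^ (m - r) with hU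
  set A : ℝ := ∑ r ∈ Finset.range (m + 1),
      (Nat.choose (2 * m + 1 - r) (m + 1) : ℝ) * p ^ (m + 1 + 1) * q ^ (m + 1 - r) with hA
  set B : ℝ := ∑ r ∈ Finset.range (m + 1),
      (Nat.choose (2 * m + 1 - r) m : ℝ) * p ^ (m + 1 + 1) * q ^ (m + 1 - r) with hB
  have h1 : T = A + B + p ^ (m + 1 + 1) := by
    rw [hT, Finset.sum_range_succ]
    have e1 : 2 * (m + 1) - (m + 1) = m + 1 := by omega
    rw [e1, Nat.choose_self, Nat.sub_self, pow_zero]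
    have e2 : ∀ r ∈ Finset.range (m + 1),
        (Nat.choose (2 * (m + 1) - r) (m + 1) : ℝ) * p ^ (m + 1 + 1) * q ^ (m + 1 - r)
          = (Nat.choose (2 * m + 1 - r) (m + 1) : ℝ) * p ^ (m + 1 + 1) * q ^ (m + 1 - r)
            + (Nat.choose (2 * m + 1 - r) m : ℝ) * p ^ (m + 1 + 1) * q ^ (m + 1 - r) := by
      intro r hr
      have hr' : r ≤ m := by simpa using Nat.lt_succ_iff.mp (Finset.mem_range.mp hr)
      have e3 : 2 * (m + 1) - r = (2 * m + 1 - r) + 1 := by omega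
      rw [e3, Nat.choose_succ_succ']
      push_cast
      ring
    rw [Finset.sum_congr rfl e2, Finset.sum_add_distrib]
    ring
  have h2 : q * T = (Nat.choose (2 * (m + 1)) (m + 1) : ℝ) * p ^ (m + 1 + 1) * q ^ (m + 1 + 1)
      + A := by
    rw [hT, Finset.mul_sum, Finset.sum_range_succ']
    have e2 : ∀ r ∈ Finset.range (m + 1),
        q * ((Nat.choose (2 * (m + 1) - (r + 1)) (m + 1) : ℝ) * p ^ (m + 1 + 1)
            * q ^ (m + 1 - (r + 1)))
          = (Nat.choose (2 * m + 1 - r) (m + 1) : ℝ) * p ^ (m + 1 + 1) * q ^ (m + 1 - r) := by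
      intro r hr
      have hr' : r ≤ m := by simpa using Nat.lt_succ_iff.mp (Finset.mem_range.mp hr)
      have e3 : 2 * (m + 1) - (r + 1) = 2 * m + 1 - r := by omega
      have e4 : m + 1 - (r + 1) = m - r := by omega
      have e5 : m + 1 - r = (m - r) + 1 := by omega
      rw [e3, e4, e5, pow_succ]
      ring
    rw [Finset.sum_congr rfl e2]
    simp [hA]
    ring
  have e2 : ∀ r ∈ Finset.range m,
      (Nat.choose (2 * m + 1 - (r + 1)) m : ℝ) * p ^ (m + 1 + 1) * q ^ (m + 1 - (r + 1))
        = p * ((Nat.choose (2 * m - r) m : ℝ) * p ^ (m + 1) * q ^ (m - r)) := by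
    intro r hr
    have e3 : 2 * m + 1 - (r + 1) = 2 * m - r := by omega
    have e4 : m + 1 - (r + 1) = m - r := by omega
    rw [e3, e4, pow_succ]
    ring
  have hB2 : B = (∑ r ∈ Finset.range m,
      p * ((Nat.choose (2 * m - r) m : ℝ) * p ^ (m + 1) * q ^ (m - r)))
      + (Nat.choose (2 * m + 1) m : ℝ) * p ^ (m + 1 + 1) * q ^ (m + 1) := by
    rw [hB, Finset.sum_range_succ', Finset.sum_congr rfl e2]
    norm_num
  have hpU : p * U = (∑ r ∈ Finset.range m,
      p * ((Nat.choose (2 * m - r) m : ℝ) * p ^ (m + 1) * q ^ (m - r)))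
      + p ^ (m + 1 + 1) := by
    rw [hU, Finset.mul_sum, Finset.sum_range_succ]
    have e5 : 2 * m - m = m := by omega
    rw [e5, Nat.choose_self, Nat.sub_self, pow_zero, Nat.cast_one]
    ring
  have h3 : B = p * U - p ^ (m + 1 + 1)
      + (Nat.choose (2 * m + 1) m : ℝ) * p ^ (m + 1 + 1) * q ^ (m + 1) := by
    rw [hB2]
    linarith [hpU]
  have h4 : (Nat.choose (2 * (m + 1)) (m + 1)) = 2 * Nat.choose (2 * m + 1) m := by
    have hs : Nat.choose (2 * m + 1) (2 * m + 1 - (m + 1)) = Nat.choose (2 * m + 1) (m + 1) :=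
      Nat.choose_symm (by omega)
    have e : 2 * m + 1 - (m + 1) = m := by omega
    rw [e] at hs
    have e2 : 2 * (m + 1) = (2 * m + 1) + 1 := by omega
    rw [e2, Nat.choose_succ_succ']
    omega
  have hc : (Nat.choose (2 * (m + 1)) (m + 1) : ℝ) = 2 * (Nat.choose (2 * m + 1) m : ℝ) := by
    exact_mod_cast h4
  have key : p * T = p * (U + p ^ (m + 1) * q ^ (m + 1)
      * (Nat.choose (2 * (m + 1)) (m + 1) : ℝ) * (1 / 2 - q)) := by
    linear_combination h1 - h2 + h3 + T * hq
      - (p ^ (m + 1 + 1) * q ^ (m + 1) / 2) * hc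
  exact mul_left_cancel₀ hp key
end

section
/- For nonnegative integer n and real numbers p, q with 0 < p < 1 and q = 1 - p, the identity p · ∑_{r=0}^{n} [(−n)_r (1)_r / ((−2n)_r r!)] q^{−r} + q · ∑_{r=0}^{n} [(−n)_r (1)_r / ((−2n)_r r!)] p^{−r} = (n!)^2 / (p^n q^n (2n)!) holds, where (a)_r denotes the Pochhammer symbol (rising factorial) and the summand for each r ≤ n is interpreted via the ratio (−n)_r/(−2n)_r = [n!/(n−r)!] · [(2n−r)!/(2n)!]. -/
noncomputable def Shyp (n : ℕ) (x : ℝ) : ℝ :=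
  ∑ k ∈ Finset.range (n+1), ((n+k).choose k : ℝ) * x^k

lemma Shyp_rec (n : ℕ) (q : ℝ) :
    (1 - q) * Shyp (n+1) q
      = Shyp n q + ((2*n+1).choose (n+1) : ℝ) * q^(n+1) * (1 - 2*q) := by
  have hS1 : Shyp (n+1) q
      = ∑ k ∈ Finset.range (n+1), (((n+1+k).choose k : ℝ) + ((n+1+k).choose (k+1) : ℝ)) * q^(k+1) + 1 := by
    rw [Shyp, Finset.sum_range_succ']
    simp only [Nat.add_zero, Nat.choose_zero_right, Nat.cast_one, one_mul, pow_zero, mul_one]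
    congr 1
    refine Finset.sum_congr rfl fun k _ => ?_
    have h : (n+1+(k+1)).choose (k+1) = (n+1+k).choose k + (n+1+k).choose (k+1) :=
      Nat.choose_succ_succ' (n+1+k) k ▸ Nat.choose_succ_succ (n+1+k) k
    rw [h]; push_cast; ring
  have hqS : q * Shyp (n+1) q
      = ∑ k ∈ Finset.range (n+1), ((n+1+k).choose k : ℝ) * q^(k+1)
        + ((2*n+2).choose (n+1) : ℝ) * q^(n+2) := by
    rw [Shyp, Finset.mul_sum, Finset.sum_range_succ]
    have h2 : n+1+(n+1) = 2*n+2 := by ring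
    rw [h2]
    congr 1
    · refine Finset.sum_congr rfl fun k _ => by ring
    · ring
  have hT : ∑ k ∈ Finset.range (n+1), ((n+1+k).choose (k+1) : ℝ) * q^(k+1) + 1
      = Shyp n q + ((2*n+1).choose (n+1) : ℝ) * q^(n+1) := by
    have h := Finset.sum_range_succ' (fun j => ((n+j).choose j : ℝ) * q^j) (n+1)
    have h' := Finset.sum_range_succ (fun j => ((n+j).choose j : ℝ) * q^j) (n+1)
    rw [Shyp]
    have e1 : ∀ k : ℕ, ((n+(k+1)).choose (k+1) : ℝ) = ((n+1+k).choose (k+1) : ℝ) := by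
      intro k
      have h : n+(k+1) = n+1+k := by omega
      rw [h]
    have e2 : n + (n+1) = 2*n+1 := by ring
    calc ∑ k ∈ Finset.range (n+1), ((n+1+k).choose (k+1) : ℝ) * q^(k+1) + 1
        = ∑ k ∈ Finset.range (n+1), ((n+(k+1)).choose (k+1) : ℝ) * q^(k+1)
            + ((n+0).choose 0 : ℝ) * q^0 := by
          simp only [e1, Nat.add_zero, Nat.choose_zero_right, Nat.cast_one, pow_zero, mul_one]
      _ = ∑ j ∈ Finset.range (n+2), ((n+j).choose j : ℝ) * q^j := (h).symm
      _ = Shyp n q + ((2*n+1).choose (n+1) : ℝ) * q^(n+1) := by rw [h', Shyp, e2]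
  have hcentral : ((2*n+2).choose (n+1) : ℝ) = 2 * ((2*n+1).choose (n+1) : ℝ) := by
    have : (2*n+2).choose (n+1) = (2*n+1).choose n + (2*n+1).choose (n+1) :=
      Nat.choose_succ_succ' (2*n+1) n ▸ Nat.choose_succ_succ (2*n+1) n
    have hsym : (2*n+1).choose n = (2*n+1).choose (n+1) := by
      rw [← Nat.choose_symm (by omega : n ≤ 2*n+1)]
      congr 1; omega
    rw [this, hsym]; push_cast; ring
  have expand : (1 - q) * Shyp (n+1) q = Shyp (n+1) q - q * Shyp (n+1) q := by ring
  rw [expand, hqS, hS1, hcentral]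
  have hsplit : ∑ k ∈ Finset.range (n+1), (((n+1+k).choose k : ℝ) + ((n+1+k).choose (k+1) : ℝ)) * q^(k+1)
      = ∑ k ∈ Finset.range (n+1), ((n+1+k).choose k : ℝ) * q^(k+1)
        + ∑ k ∈ Finset.range (n+1), ((n+1+k).choose (k+1) : ℝ) * q^(k+1) := by
    rw [← Finset.sum_add_distrib]
    exact Finset.sum_congr rfl fun k _ => by ring
  rw [hsplit]
  linear_combination hT

lemma Shyp_key (n : ℕ) : ∀ p : ℝ,
    p^(n+1) * Shyp n (1-p) + (1-p)^(n+1) * Shyp n p = 1 := by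
  induction n with
  | zero => intro p; simp [Shyp]
  | succ n ih =>
    intro p
    have h1 := Shyp_rec n (1-p)
    have h2 := Shyp_rec n p
    have hsym : ((1:ℝ) - (1-p)) = p := by ring
    rw [hsym] at h1
    have ihp := ih p
    linear_combination p^(n+1) * h1 + (1-p)^(n+1) * h2 + ihp

lemma sum_reindex (n : ℕ) (x : ℝ) (hx : x ≠ 0) :
    ∑ r ∈ Finset.range (n + 1),
        ((n.factorial : ℝ) / (n - r).factorial) * ((2 * n - r).factorial / (2 * n).factorial)
          * x⁻¹ ^ r
      = (n.factorial : ℝ)^2 / ((2*n).factorial * x^n) * Shyp n x := by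
  rw [show (n+1) = n+1 from rfl, ← Finset.sum_range_reflect]
  rw [Shyp, Finset.mul_sum]
  refine Finset.sum_congr rfl fun k hk => ?_
  have hk' : k ≤ n := by simpa using Nat.lt_succ_iff.mp (Finset.mem_range.mp hk)
  have e0 : n + 1 - 1 - k = n - k := by omega
  have e1 : n - (n - k) = k := by omega
  have e2 : 2 * n - (n - k) = n + k := by omega
  rw [e0, e1, e2]
  have hch : ((n+k).choose k : ℝ) * k.factorial * n.factorial = (n+k).factorial := by
    have h := Nat.choose_mul_factorial_mul_factorial (show k ≤ n+k by omega)
    rw [Nat.add_sub_cancel] at h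
    exact_mod_cast h
  have hpow : x^(n-k) * x^k = x^n := by
    rw [← pow_add, Nat.sub_add_cancel hk']
  have hxk : x^(n-k) ≠ 0 := pow_ne_zero _ hx
  rw [inv_pow, ← hch, ← hpow]
  have hkf : (k.factorial : ℝ) ≠ 0 := Nat.cast_ne_zero.mpr k.factorial_ne_zero
  have h2f : ((2*n).factorial : ℝ) ≠ 0 := Nat.cast_ne_zero.mpr (2*n).factorial_ne_zero
  field_simp

theorem hypergeometric_identity (n : ℕ) (p q : ℝ) (hp0 : 0 < p) (hp1 : p < 1)
    (hq : q = 1 - p) :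
    p * ∑ r ∈ Finset.range (n + 1),
        ((n.factorial : ℝ) / (n - r).factorial) * ((2 * n - r).factorial / (2 * n).factorial)
          * q⁻¹ ^ r
      + q * ∑ r ∈ Finset.range (n + 1),
        ((n.factorial : ℝ) / (n - r).factorial) * ((2 * n - r).factorial / (2 * n).factorial)
          * p⁻¹ ^ r
      = (n.factorial : ℝ) ^ 2 / (p ^ n * q ^ n * (2 * n).factorial) := by
  have hq0 : 0 < q := by rw [hq]; linarith
  have hp : p ≠ 0 := ne_of_gt hp0
  have hqne : q ≠ 0 := ne_of_gt hq0
  rw [sum_reindex n q hqne, sum_reindex n p hp]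
  have key : p^(n+1) * Shyp n q + q^(n+1) * Shyp n p = 1 := by
    rw [hq]; exact Shyp_key n p
  have h2f : ((2*n).factorial : ℝ) ≠ 0 := Nat.cast_ne_zero.mpr (2*n).factorial_ne_zero
  have hpn : p^n ≠ 0 := pow_ne_zero _ hp
  have hqn : q^n ≠ 0 := pow_ne_zero _ hqne
  field_simp
  linear_combination key
end
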